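/- Let a > 0 and set q₁ = Φ(a), q₂ = Φ(a√2), q₃ = Φ(a√3). Define the quadratic D(τ) = (−9q₁ + 9q₂ − 3q₃)τ² + (6q₁ − 12q₂ + 6q₃)τ + (q₁ + 3q₂ − 3q₃), which equals the derivative with respect to τ of ΔP(3, τ) = Σ_{j=1}^{3} q_j C(3, j)(1−τ)^j τ^{3−j} − q₁(1−τ). Then D(τ) > 0 for every τ ∈ [0, 1/2]. -/

import Mathlib

open MeasureTheory Real

/-- The standard normal cumulative distribution function
`Φ(x) = (1/√(2π)) ∫_{-∞}^{x} e^{-t²/2} dt`. -/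
noncomputable def stdGaussianCDF (x : ℝ) : ℝ :=
  (Real.sqrt (2 * Real.pi))⁻¹ * ∫ t in Set.Iic x, Real.exp (-t ^ 2 / 2)

/-- `P(k, τ) = Σ_{j=1}^{k} Φ(a√j) C(k, j) (1−τ)^j τ^{k−j}`. -/
noncomputable def accP (a : ℝ) (k : ℕ) (τ : ℝ) : ℝ :=
  ∑ j ∈ Finset.Icc 1 k,
    stdGaussianCDF (a * Real.sqrt j) * (k.choose j) * (1 - τ) ^ j * τ ^ (k - j)

/-- `ΔP(k, τ) = P(k, τ) − q₁ (1−τ)` where `q₁ = Φ(a)`. -/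
noncomputable def deltaP (a : ℝ) (k : ℕ) (τ : ℝ) : ℝ :=
  accP a k τ - stdGaussianCDF a * (1 - τ)

/-- The quadratic `D(τ) = (−9q₁+9q₂−3q₃)τ² + (6q₁−12q₂+6q₃)τ + (q₁+3q₂−3q₃)`
where `qⱼ = Φ(a√j)`. -/
noncomputable def quadD (a τ : ℝ) : ℝ :=
  (-9 * stdGaussianCDF a + 9 * stdGaussianCDF (a * Real.sqrt 2)
      - 3 * stdGaussianCDF (a * Real.sqrt 3)) * τ ^ 2
    + (6 * stdGaussianCDF a - 12 * stdGaussianCDF (a * Real.sqrt 2)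
      + 6 * stdGaussianCDF (a * Real.sqrt 3)) * τ
    + (stdGaussianCDF a + 3 * stdGaussianCDF (a * Real.sqrt 2)
      - 3 * stdGaussianCDF (a * Real.sqrt 3))

/-! ### Auxiliary lemmas -/

lemma gaussInt : Integrable (fun t : ℝ => Real.exp (-t ^ 2 / 2)) := by
  have h := integrable_exp_neg_mul_sq (b := (1/2 : ℝ)) (by norm_num)
  apply h.congr
  filter_upwards with t
  ring_nf

lemma sgc_mono : Monotone stdGaussianCDF := by
  intro a b h
  unfold stdGaussianCDF
  apply mul_le_mul_of_nonneg_left _ (by positivity)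
  apply setIntegral_mono_set gaussInt.integrableOn
  · filter_upwards with t using Real.exp_nonneg _
  · exact HasSubset.Subset.eventuallyLE (Set.Iic_subset_Iic.2 h)

lemma sgc_zero : stdGaussianCDF 0 = 1 / 2 := by
  have heven : (∫ t in Set.Iic (0:ℝ), Real.exp (-t ^ 2 / 2))
      = ∫ t in Set.Ioi (0:ℝ), Real.exp (-t ^ 2 / 2) := by
    rw [show (Set.Ioi (0:ℝ)) = Set.Ioi (-0 : ℝ) by norm_num,
      ← integral_comp_neg_Iic]
    congr 1
    ext t
    ring_nf
  have htot : (∫ t in Set.Iic (0:ℝ), Real.exp (-t ^ 2 / 2))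
      + (∫ t in Set.Ioi (0:ℝ), Real.exp (-t ^ 2 / 2))
      = ∫ t : ℝ, Real.exp (-t ^ 2 / 2) :=
    intervalIntegral.integral_Iic_add_Ioi gaussInt.integrableOn gaussInt.integrableOn
  have hg : (∫ t : ℝ, Real.exp (-t ^ 2 / 2)) = Real.sqrt (2 * Real.pi) := by
    have := integral_gaussian (1/2 : ℝ)
    rw [show Real.sqrt (Real.pi / (1/2)) = Real.sqrt (2 * Real.pi) by ring_nf] at this
    rw [← this]
    congr 1
    ext t
    ring_nf
  unfold stdGaussianCDF
  rw [heven] at htot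
  have h : (∫ t in Set.Ioi (0:ℝ), Real.exp (-t ^ 2 / 2)) = Real.sqrt (2 * Real.pi) / 2 := by
    rw [hg] at htot; linarith
  rw [heven, h]
  have : Real.sqrt (2 * Real.pi) ≠ 0 := by positivity
  field_simp

lemma sgc_gap {a b : ℝ} (h0 : 0 ≤ a) (hab : a ≤ b) :
    stdGaussianCDF b - stdGaussianCDF a
      ≤ (Real.sqrt (2 * Real.pi))⁻¹ * ((b - a) * Real.exp (-a ^ 2 / 2)) := by
  unfold stdGaussianCDF
  rw [← mul_sub]
  apply mul_le_mul_of_nonneg_left _ (by positivity)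
  rw [intervalIntegral.integral_Iic_sub_Iic gaussInt.integrableOn gaussInt.integrableOn]
  calc (∫ t in a..b, Real.exp (-t ^ 2 / 2))
      ≤ ∫ _t in a..b, Real.exp (-a ^ 2 / 2) := by
        apply intervalIntegral.integral_mono_on hab
          gaussInt.intervalIntegrable (intervalIntegrable_const)
        intro t ht
        apply Real.exp_le_exp.2
        have : a ^ 2 ≤ t ^ 2 := pow_le_pow_left₀ h0 ht.1 2
        linarith
    _ = (b - a) * Real.exp (-a ^ 2 / 2) := by
        simp [intervalIntegral.integral_const, smul_eq_mul]

lemma sgc_lower {a : ℝ} (h0 : 0 ≤ a) :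
    1 / 2 + (Real.sqrt (2 * Real.pi))⁻¹ * ((a + a ^ 3 / 3) * Real.exp (-a ^ 2 / 2))
      ≤ stdGaussianCDF a := by
  have key : (a + a ^ 3 / 3) * Real.exp (-a ^ 2 / 2)
      ≤ ∫ t in (0:ℝ)..a, Real.exp (-t ^ 2 / 2) := by
    have hle : ∀ t ∈ Set.Icc (0:ℝ) a,
        (1 + (a ^ 2 - t ^ 2) / 2) * Real.exp (-a ^ 2 / 2) ≤ Real.exp (-t ^ 2 / 2) := by
      intro t ht
      have h1 : (1 + (a ^ 2 - t ^ 2) / 2) ≤ Real.exp ((a ^ 2 - t ^ 2) / 2) := by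
        have := Real.add_one_le_exp ((a ^ 2 - t ^ 2) / 2)
        linarith
      have h2 : Real.exp ((a ^ 2 - t ^ 2) / 2) * Real.exp (-a ^ 2 / 2)
          = Real.exp (-t ^ 2 / 2) := by
        rw [← Real.exp_add]; ring_nf
      calc (1 + (a ^ 2 - t ^ 2) / 2) * Real.exp (-a ^ 2 / 2)
          ≤ Real.exp ((a ^ 2 - t ^ 2) / 2) * Real.exp (-a ^ 2 / 2) := by
            apply mul_le_mul_of_nonneg_right h1 (Real.exp_nonneg _)
        _ = Real.exp (-t ^ 2 / 2) := h2
    have hint : (∫ t in (0:ℝ)..a, (1 + (a ^ 2 - t ^ 2) / 2) * Real.exp (-a ^ 2 / 2))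
        ≤ ∫ t in (0:ℝ)..a, Real.exp (-t ^ 2 / 2) := by
      apply intervalIntegral.integral_mono_on h0
        (Continuous.intervalIntegrable (by continuity) _ _)
        gaussInt.intervalIntegrable hle
    have hval : (∫ t in (0:ℝ)..a, (1 + (a ^ 2 - t ^ 2) / 2) * Real.exp (-a ^ 2 / 2))
        = (a + a ^ 3 / 3) * Real.exp (-a ^ 2 / 2) := by
      rw [intervalIntegral.integral_mul_const]
      congr 1
      have h3 : (∫ t in (0:ℝ)..a, (1 + (a ^ 2 - t ^ 2) / 2))
          = ∫ t in (0:ℝ)..a, ((1 + a ^ 2 / 2) - t ^ 2 / 2) := by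
        congr 1; ext t; ring
      rw [h3]
      rw [intervalIntegral.integral_sub (intervalIntegrable_const)
        (Continuous.intervalIntegrable (by continuity) _ _)]
      simp [intervalIntegral.integral_div, integral_pow]
      ring
    linarith
  have hrepr : stdGaussianCDF a - stdGaussianCDF 0
      = (Real.sqrt (2 * Real.pi))⁻¹ * ∫ t in (0:ℝ)..a, Real.exp (-t ^ 2 / 2) := by
    unfold stdGaussianCDF
    rw [← mul_sub,
      intervalIntegral.integral_Iic_sub_Iic gaussInt.integrableOn gaussInt.integrableOn]
  have hc : (0:ℝ) ≤ (Real.sqrt (2 * Real.pi))⁻¹ := by positivity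
  have := mul_le_mul_of_nonneg_left key hc
  rw [sgc_zero] at hrepr
  linarith

lemma aux_num (a E : ℝ) (ha : 0 < a) (hE : 0 < E) (hEb : E * (1 + a^2/4)^2 ≤ 1) :
    0.39895 * (a * E * (1.4852816 - a^2/3 + 0.9535123 * E)) < 1/2 := by
  nlinarith [sq_nonneg (a - 0.8155), sq_nonneg (E - 0.7344), sq_nonneg (a*E - 0.6), sq_nonneg a,
    sq_nonneg E, mul_pos ha hE, sq_nonneg (a - 1), sq_nonneg (a*E), mul_pos (mul_pos ha hE) hE]

lemma sqrt2_lb : (1.41421356 : ℝ) ≤ Real.sqrt 2 := by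
  rw [show (1.41421356:ℝ) = Real.sqrt (1.41421356^2) from (Real.sqrt_sq (by norm_num)).symm]
  exact Real.sqrt_le_sqrt (by norm_num)

lemma sqrt2_ub : Real.sqrt 2 ≤ (1.41421357 : ℝ) := by
  rw [show (1.41421357:ℝ) = Real.sqrt (1.41421357^2) from (Real.sqrt_sq (by norm_num)).symm]
  exact Real.sqrt_le_sqrt (by norm_num)

lemma sqrt3_lb : (1.73205080 : ℝ) ≤ Real.sqrt 3 := by
  rw [show (1.73205080:ℝ) = Real.sqrt (1.73205080^2) from (Real.sqrt_sq (by norm_num)).symm]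
  exact Real.sqrt_le_sqrt (by norm_num)

lemma sqrt3_ub : Real.sqrt 3 ≤ (1.73205081 : ℝ) := by
  rw [show (1.73205081:ℝ) = Real.sqrt (1.73205081^2) from (Real.sqrt_sq (by norm_num)).symm]
  exact Real.sqrt_le_sqrt (by norm_num)

lemma inv_sqrt2pi_ub : (Real.sqrt (2 * Real.pi))⁻¹ ≤ 0.39895 := by
  have h1 : (2.5066 : ℝ) ≤ Real.sqrt (2 * Real.pi) := by
    rw [show (2.5066:ℝ) = Real.sqrt (2.5066^2) from (Real.sqrt_sq (by norm_num)).symm]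
    exact Real.sqrt_le_sqrt (by nlinarith [Real.pi_gt_d6])
  calc (Real.sqrt (2 * Real.pi))⁻¹ ≤ (2.5066:ℝ)⁻¹ := inv_anti₀ (by norm_num) h1
    _ ≤ 0.39895 := by norm_num

/-- The master inequality `6(q₂−q₁) + 3(q₃−q₂) < q₁`. -/
lemma master (a : ℝ) (ha : 0 < a) :
    6 * (stdGaussianCDF (a * Real.sqrt 2) - stdGaussianCDF a)
      + 3 * (stdGaussianCDF (a * Real.sqrt 3) - stdGaussianCDF (a * Real.sqrt 2))
      < stdGaussianCDF a := by
  have hE0 : (0:ℝ) < Real.exp (-a ^ 2 / 2) := Real.exp_pos _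
  have hs2_one : (1:ℝ) ≤ Real.sqrt 2 := by linarith [sqrt2_lb]
  have hs23 : Real.sqrt 2 ≤ Real.sqrt 3 := Real.sqrt_le_sqrt (by norm_num)
  have h2a : a ≤ a * Real.sqrt 2 := le_mul_of_one_le_right ha.le hs2_one
  have h23 : a * Real.sqrt 2 ≤ a * Real.sqrt 3 := mul_le_mul_of_nonneg_left hs23 ha.le
  have g2 : stdGaussianCDF (a * Real.sqrt 2) - stdGaussianCDF a
      ≤ (Real.sqrt (2 * Real.pi))⁻¹ * ((a * Real.sqrt 2 - a) * Real.exp (-a ^ 2 / 2)) :=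
    sgc_gap ha.le h2a
  have hexp2 : Real.exp (-(a * Real.sqrt 2) ^ 2 / 2)
      = Real.exp (-a ^ 2 / 2) * Real.exp (-a ^ 2 / 2) := by
    rw [← Real.exp_add]
    congr 1
    have h : (Real.sqrt 2) ^ 2 = 2 := Real.sq_sqrt (by norm_num)
    nlinarith [h]
  have g3 : stdGaussianCDF (a * Real.sqrt 3) - stdGaussianCDF (a * Real.sqrt 2)
      ≤ (Real.sqrt (2 * Real.pi))⁻¹ * ((a * Real.sqrt 3 - a * Real.sqrt 2)
        * (Real.exp (-a ^ 2 / 2) * Real.exp (-a ^ 2 / 2))) := by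
    have h := sgc_gap (show (0:ℝ) ≤ a * Real.sqrt 2 by positivity) h23
    rwa [hexp2] at h
  have low := sgc_lower ha.le
  have hEb : Real.exp (-a ^ 2 / 2) * (1 + a ^ 2 / 4) ^ 2 ≤ 1 := by
    have h1 : (1 + a ^ 2 / 4) ≤ Real.exp (a ^ 2 / 4) := by
      have := Real.add_one_le_exp (a ^ 2 / 4); linarith
    have h2 : (1 + a ^ 2 / 4) ^ 2 ≤ Real.exp (a ^ 2 / 4) * Real.exp (a ^ 2 / 4) := by
      nlinarith [Real.exp_pos (a ^ 2 / 4), sq_nonneg a]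
    have h4 : Real.exp (-a ^ 2 / 2) * (Real.exp (a ^ 2 / 4) * Real.exp (a ^ 2 / 4)) = 1 := by
      rw [← Real.exp_add, ← Real.exp_add,
        show -a ^ 2 / 2 + (a ^ 2 / 4 + a ^ 2 / 4) = (0:ℝ) by ring, Real.exp_zero]
    nlinarith [hE0.le, h2, h4]
  have hc0 : (0:ℝ) < (Real.sqrt (2 * Real.pi))⁻¹ := by positivity
  set c := (Real.sqrt (2 * Real.pi))⁻¹
  set E := Real.exp (-a ^ 2 / 2)
  have key : 6 * (c * ((a * Real.sqrt 2 - a) * E))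
      + 3 * (c * ((a * Real.sqrt 3 - a * Real.sqrt 2) * (E * E)))
      < 1/2 + c * ((a + a ^ 3 / 3) * E) := by
    rcases le_or_gt (6 * Real.sqrt 2 - 7 - a ^ 2 / 3 + 3 * (Real.sqrt 3 - Real.sqrt 2) * E) 0
      with hB | hB
    · have h := mul_nonpos_of_nonneg_of_nonpos
        (show (0:ℝ) ≤ c * (a * E) by positivity) hB
      nlinarith [h]
    · have haE : (0:ℝ) ≤ a * E := by positivity
      have hd : Real.sqrt 3 - Real.sqrt 2 ≤ 0.31783725 := by
        nlinarith [sqrt3_ub, sqrt2_lb]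
      have hBu : 6 * Real.sqrt 2 - 7 - a ^ 2 / 3 + 3 * (Real.sqrt 3 - Real.sqrt 2) * E
          ≤ 1.4852816 - a ^ 2 / 3 + 0.9535123 * E := by
        nlinarith [sqrt2_ub, mul_le_mul_of_nonneg_right hd hE0.le]
      have h1 : c * (a * E * (6 * Real.sqrt 2 - 7 - a ^ 2 / 3 + 3 * (Real.sqrt 3 - Real.sqrt 2) * E))
          ≤ 0.39895 * (a * E * (6 * Real.sqrt 2 - 7 - a ^ 2 / 3 + 3 * (Real.sqrt 3 - Real.sqrt 2) * E)) :=
        mul_le_mul_of_nonneg_right inv_sqrt2pi_ub (mul_nonneg haE hB.le)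
      have h2 : 0.39895 * (a * E * (6 * Real.sqrt 2 - 7 - a ^ 2 / 3 + 3 * (Real.sqrt 3 - Real.sqrt 2) * E))
          ≤ 0.39895 * (a * E * (1.4852816 - a ^ 2 / 3 + 0.9535123 * E)) := by
        apply mul_le_mul_of_nonneg_left _ (by norm_num)
        exact mul_le_mul_of_nonneg_left hBu haE
      have h3 := aux_num a E ha hE0 hEb
      linarith [h1, h2, h3]
  linarith

theorem stmt13 (a : ℝ) (ha : 0 < a) :
    (∀ τ : ℝ, deriv (deltaP a 3) τ = quadD a τ)
      ∧ ∀ τ ∈ Set.Icc (0 : ℝ) (1 / 2), 0 < quadD a τ := by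
  constructor
  · intro τ
    set q1 := stdGaussianCDF a with hq1
    set q2 := stdGaussianCDF (a * Real.sqrt 2) with hq2
    set q3 := stdGaussianCDF (a * Real.sqrt 3) with hq3
    have hfun : deltaP a 3 = fun t : ℝ =>
        (-3*q1 + 3*q2 - q3) * t ^ 3 + (3*q1 - 6*q2 + 3*q3) * t ^ 2
          + (q1 + 3*q2 - 3*q3) * t + (q3 - q1) := by
      funext t
      show accP a 3 t - stdGaussianCDF a * (1 - t) = _
      rw [accP]
      rw [show Finset.Icc 1 3 = ({1, 2, 3} : Finset ℕ) by rfl]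
      simp [Finset.sum_insert, Real.sqrt_one, hq1, hq2, hq3]
      push_cast
      ring
    rw [hfun]
    have h : HasDerivAt (fun t : ℝ =>
        (-3*q1 + 3*q2 - q3) * t ^ 3 + (3*q1 - 6*q2 + 3*q3) * t ^ 2
          + (q1 + 3*q2 - 3*q3) * t + (q3 - q1))
        ((-3*q1 + 3*q2 - q3) * (3 * τ ^ 2) + ((3*q1 - 6*q2 + 3*q3) * (2 * τ)
          + ((q1 + 3*q2 - 3*q3) * 1 + 0))) τ := by
      have h0 := (((hasDerivAt_pow 3 τ).const_mul (-3*q1 + 3*q2 - q3)).add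
        (((hasDerivAt_pow 2 τ).const_mul (3*q1 - 6*q2 + 3*q3)).add
          (((hasDerivAt_id τ).const_mul (q1 + 3*q2 - 3*q3)).add
            (hasDerivAt_const τ (q3 - q1)))))
      exact (h0.congr_deriv (by norm_num)).congr_of_eventuallyEq
        (Filter.Eventually.of_forall fun t => by simp only [Pi.add_apply, id]; ring)
    rw [h.deriv]
    show _ = (-9*q1 + 9*q2 - 3*q3) * τ ^ 2 + (6*q1 - 12*q2 + 6*q3) * τ + (q1 + 3*q2 - 3*q3)
    ring
  · intro τ hτ
    obtain ⟨hτ0, hτh⟩ := hτ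
    have hM := master a ha
    have h12 : stdGaussianCDF a ≤ stdGaussianCDF (a * Real.sqrt 2) :=
      sgc_mono (by nlinarith [sqrt2_lb])
    have h23 : stdGaussianCDF (a * Real.sqrt 2) ≤ stdGaussianCDF (a * Real.sqrt 3) :=
      sgc_mono (by nlinarith [sqrt2_ub, sqrt3_lb])
    have hq1pos : (0:ℝ) < stdGaussianCDF a := by
      have hl := sgc_lower ha.le
      nlinarith [hl,
        mul_pos (show (0:ℝ) < (Real.sqrt (2*Real.pi))⁻¹ by positivity)
          (mul_pos (show (0:ℝ) < a + a ^ 3 / 3 by positivity) (Real.exp_pos (-a ^ 2 / 2)))]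
    set q1 := stdGaussianCDF a
    set q2 := stdGaussianCDF (a * Real.sqrt 2)
    set q3 := stdGaussianCDF (a * Real.sqrt 3)
    show 0 < (-9*q1 + 9*q2 - 3*q3) * τ ^ 2 + (6*q1 - 12*q2 + 6*q3) * τ + (q1 + 3*q2 - 3*q3)
    have hD0 : 0 < q1 + 3*q2 - 3*q3 := by linarith
    have hDh : 0 < 7*q1 - 3*q2 - 3*q3 := by linarith
    have hA : -9*q1 + 9*q2 - 3*q3 ≤ 0 := by linarith
    nlinarith [mul_nonneg (mul_nonneg (neg_nonneg.2 hA) hτ0) (by linarith : (0:ℝ) ≤ 1/2 - τ),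
      mul_nonneg (by linarith : (0:ℝ) ≤ 1 - 2*τ) hD0.le,
      mul_nonneg hτ0 hDh.le, sq_nonneg τ]
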